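/- With α* = ρ²/(ρ² + (d/N)σ²), if ρ² > 0 and σ² > 0 then E(f_{α*}) < E(f_ℓ) and E(f_{α*}) < E(f_g), i.e., the optimally interpolated model strictly beats both the purely local model (α=1) and the purely global model (α=0). -/

import Mathlib

set_option maxHeartbeats 1000000


/-- With `α* = ρ²/(ρ² + (d/N)σ²)`, if `ρ² > 0` and `σ² > 0` then the optimally
interpolated model strictly beats both the purely local model (`α = 1`, error
`(d/N)σ²`) and the purely global model (`α = 0`, error `((M-1)/M)ρ² + (d/(MN))σ²`). -/
theorem interpolation_beats_extremes
    (d N : ℝ) (M : ℕ) (hd : 0 < d) (hN : 0 < N) (hM : 2 ≤ M)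
    (ρ2 σ2 : ℝ) (hρ2 : 0 < ρ2) (hσ2 : 0 < σ2)
    (E : ℝ → ℝ)
    (hE : ∀ α, E α = α ^ 2 * (d / N) * σ2
      + (1 - α) ^ 2 * (((M : ℝ) - 1) / M) * ρ2
      + (1 - α ^ 2) * (d / (M * N)) * σ2)
    (αstar : ℝ) (hαstar : αstar = ρ2 / (ρ2 + (d / N) * σ2)) :
    E αstar < E 1 ∧ E αstar < E 0 := by
  have hm : (2 : ℝ) ≤ (M : ℝ) := by exact_mod_cast hM
  have hm0 : (0 : ℝ) < (M : ℝ) := by linarith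
  have hmne : (M : ℝ) ≠ 0 := ne_of_gt hm0
  have hNne : N ≠ 0 := ne_of_gt hN
  set s : ℝ := (d / N) * σ2 with hs
  have hs0 : 0 < s := by positivity
  have hden : 0 < ρ2 + s := by linarith
  have ht : αstar * (ρ2 + s) = ρ2 := by
    rw [hαstar]; field_simp
  have ht1 : (1 - αstar) * (ρ2 + s) = s := by nlinarith [ht]
  have ht0 : 0 < αstar := by rw [hαstar]; positivity
  have ht01 : αstar < 1 := by nlinarith [ht1]
  rw [hE, hE, hE]
  have eqL : αstar ^ 2 * (d / N) * σ2 + (1 - αstar) ^ 2 * (((M : ℝ) - 1) / M) * ρ2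
      + (1 - αstar ^ 2) * (d / (M * N)) * σ2
      = αstar ^ 2 * s + (1 - αstar) ^ 2 * (((M : ℝ) - 1) / M) * ρ2
      + (1 - αstar ^ 2) * (s / M) := by
    rw [hs]; field_simp
  have eq1 : (1:ℝ) ^ 2 * (d / N) * σ2 + (1 - 1) ^ 2 * (((M : ℝ) - 1) / M) * ρ2
      + (1 - 1 ^ 2) * (d / (M * N)) * σ2 = s := by rw [hs]; ring
  have eq0 : (0:ℝ) ^ 2 * (d / N) * σ2 + (1 - 0) ^ 2 * (((M : ℝ) - 1) / M) * ρ2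
      + (1 - 0 ^ 2) * (d / (M * N)) * σ2
      = (((M : ℝ) - 1) / M) * ρ2 + s / M := by
    rw [hs]; field_simp; ring
  rw [eqL, eq1, eq0]
  have hm1 : (0:ℝ) < (M : ℝ) - 1 := by linarith
  constructor
  · have key : (M : ℝ) * (αstar ^ 2 * s + (1 - αstar) ^ 2 * (((M : ℝ) - 1) / M) * ρ2
        + (1 - αstar ^ 2) * (s / M)) < (M : ℝ) * s := by
      have expand : (M : ℝ) * (αstar ^ 2 * s + (1 - αstar) ^ 2 * (((M : ℝ) - 1) / M) * ρ2
          + (1 - αstar ^ 2) * (s / M))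
          = (M : ℝ) * αstar ^ 2 * s + (1 - αstar) ^ 2 * ((M : ℝ) - 1) * ρ2
          + (1 - αstar ^ 2) * s := by field_simp
      rw [expand]
      nlinarith [ht, mul_pos hm1 (mul_pos (sub_pos.mpr ht01) hs0),
        mul_pos (sub_pos.mpr ht01) hs0, sub_pos.mpr ht01]
    exact lt_of_mul_lt_mul_left (by linarith [key]) (le_of_lt hm0)
  · have key : (M : ℝ) * (αstar ^ 2 * s + (1 - αstar) ^ 2 * (((M : ℝ) - 1) / M) * ρ2
        + (1 - αstar ^ 2) * (s / M)) < (M : ℝ) * ((((M : ℝ) - 1) / M) * ρ2 + s / M) := by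
      have expand : (M : ℝ) * (αstar ^ 2 * s + (1 - αstar) ^ 2 * (((M : ℝ) - 1) / M) * ρ2
          + (1 - αstar ^ 2) * (s / M))
          = (M : ℝ) * αstar ^ 2 * s + (1 - αstar) ^ 2 * ((M : ℝ) - 1) * ρ2
          + (1 - αstar ^ 2) * s := by field_simp
      have expand2 : (M : ℝ) * ((((M : ℝ) - 1) / M) * ρ2 + s / M)
          = ((M : ℝ) - 1) * ρ2 + s := by field_simp
      rw [expand, expand2]
      nlinarith [ht, mul_pos hm1 (mul_pos ht0 hρ2), mul_pos ht0 hρ2, sub_pos.mpr ht01]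
    exact lt_of_mul_lt_mul_left (by linarith [key]) (le_of_lt hm0)
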